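/- Let 1 < p⃗ < ∞, 1 ≤ θ ≤ ∞, and 0 < λ < 1/p_1+⋯+1/p_n. Then for every measurable f : ℝ^n → ℂ, the local mixed Morrey norm and the homogeneous mixed Herz norm with exponent −λ are equivalent: ‖f‖_{LM^λ_{p⃗,θ}} ∼ (Σ_{j∈ℤ} (2^{-λj}‖f·χ_{A_j}‖_{L^{p⃗}})^θ)^{1/θ} = ‖f‖_{K̇^{-λ,θ}_{p⃗}}, with equivalence constants independent of f. -/

import Mathlib

open MeasureTheory ENNReal NNReal Set Filter

noncomputable section

namespace LMM

/-- `L^p` "norm" (with the usual `essSup` convention for `p = ∞`)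
of an `ℝ≥0∞`-valued function on `ℝ` with respect to a measure `μ`. -/
def lpNormE (p : ℝ≥0∞) (g : ℝ → ℝ≥0∞) (μ : Measure ℝ) : ℝ≥0∞ :=
  if p = ∞ then essSup g μ else (∫⁻ t, g t ^ p.toReal ∂μ) ^ (1 / p.toReal)

/-- Iterated mixed Lebesgue norm of an `ℝ≥0∞`-valued function on `ℝ^n`:
the innermost integration is in the variable `x 1` with exponent `p 1`,
the outermost in `x n` with exponent `p n`. -/
def mixedNorm : (n : ℕ) → (Fin n → ℝ≥0∞) → ((Fin n → ℝ) → ℝ≥0∞) → ℝ≥0∞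
  | 0, _, g => g finZeroElim
  | (n + 1), p, g =>
      lpNormE (p (Fin.last n))
        (fun t => mixedNorm n (fun i => p i.castSucc) (fun x => g (Fin.snoc x t)))
        volume

/-- Mixed Lebesgue norm of `g` restricted to a set `S`. -/
def mixedNormOn (n : ℕ) (p : Fin n → ℝ≥0∞) (g : (Fin n → ℝ) → ℝ≥0∞)
    (S : Set (Fin n → ℝ)) : ℝ≥0∞ :=
  mixedNorm n p (S.indicator g)

/-- The (closed) cube centered at `c` with side length `2 * r`. -/
def cubeAt {n : ℕ} (c : Fin n → ℝ) (r : ℝ) : Set (Fin n → ℝ) := {x | ∀ i, |x i - c i| ≤ r}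

/-- The cube `Q(0, r)` centered at the origin with side length `2 * r`. -/
def cube0 (n : ℕ) (r : ℝ) : Set (Fin n → ℝ) := cubeAt 0 r

/-- Euclidean norm on `Fin n → ℝ`. -/
def euclNorm {n : ℕ} (x : Fin n → ℝ) : ℝ := Real.sqrt (∑ i, x i ^ 2)

/-- The closed Euclidean ball of radius `r` centered at the origin. -/
def closedBall0 (n : ℕ) (r : ℝ) : Set (Fin n → ℝ) := {x | euclNorm x ≤ r}

/-- The local mixed Morrey-type quasi-norm `‖·‖_{LM_{p θ, w}}` of an
`ℝ≥0∞`-valued function. -/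
def LMnormE (n : ℕ) (p : Fin n → ℝ≥0∞) (θ : ℝ≥0∞) (w : ℝ → ℝ)
    (g : (Fin n → ℝ) → ℝ≥0∞) : ℝ≥0∞ :=
  lpNormE θ (fun r => ENNReal.ofReal (w r) * mixedNormOn n p g (cube0 n r))
    (volume.restrict (Ioi (0 : ℝ)))

/-- The local mixed Morrey-type quasi-norm of a real-valued function. -/
def LMnorm (n : ℕ) (p : Fin n → ℝ≥0∞) (θ : ℝ≥0∞) (w : ℝ → ℝ)
    (f : (Fin n → ℝ) → ℝ) : ℝ≥0∞ :=
  LMnormE n p θ w (fun x => (‖f x‖₊ : ℝ≥0∞))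

/-- `1/p₁ + ⋯ + 1/pₙ`. -/
def sumInv {n : ℕ} (p : Fin n → ℝ≥0∞) : ℝ := ∑ i, ((p i)⁻¹).toReal

/-- Hardy–Littlewood maximal operator (over cubes) of an `ℝ≥0∞`-valued function. -/
def maximalE {n : ℕ} (g : (Fin n → ℝ) → ℝ≥0∞) (x : Fin n → ℝ) : ℝ≥0∞ :=
  ⨆ (c : Fin n → ℝ) (r : ℝ) (_ : 0 < r) (_ : x ∈ cubeAt c r),
    (volume (cubeAt c r))⁻¹ * ∫⁻ y in cubeAt c r, g y

/-- Hardy–Littlewood maximal operator of a real-valued function. -/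
def maximal {n : ℕ} (f : (Fin n → ℝ) → ℝ) : (Fin n → ℝ) → ℝ≥0∞ :=
  maximalE (fun y => (‖f y‖₊ : ℝ≥0∞))

/-- Weighted `L^θ` norm `‖v · g‖_{L^θ(0,∞)}` of an `ℝ≥0∞`-valued function. -/
def wLpE (θ : ℝ≥0∞) (v : ℝ → ℝ) (g : ℝ → ℝ≥0∞) : ℝ≥0∞ :=
  lpNormE θ (fun r => ENNReal.ofReal (v r) * g r) (volume.restrict (Ioi (0 : ℝ)))

/-- The dual Hardy operator `H* g (r) = ∫_r^∞ g`. -/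
def dualHardyE (g : ℝ → ℝ≥0∞) (r : ℝ) : ℝ≥0∞ := ∫⁻ t in Ioi r, g t

/-- The Hardy operator `H g (r) = ∫_0^r g`. -/
def hardyE (g : ℝ → ℝ≥0∞) (r : ℝ) : ℝ≥0∞ := ∫⁻ t in Ioo 0 r, g t

/-- The weight `v̂₁(r) = r^{-(1/p₁+⋯+1/pₙ)-1} w(r)`. -/
def vhat1 {n : ℕ} (p : Fin n → ℝ≥0∞) (w : ℝ → ℝ) (r : ℝ) : ℝ :=
  r ^ (-(sumInv p) - 1) * w r

/-- The weight `v̂₂(r) = r^{-(1/p₁+⋯+1/pₙ)} w(r)`. -/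
def vhat2 {n : ℕ} (p : Fin n → ℝ≥0∞) (w : ℝ → ℝ) (r : ℝ) : ℝ :=
  r ^ (-(sumInv p)) * w r

/-- Boundedness of the dual Hardy operator `H*` from `L_{θ,v₁}(0,∞)` to `L_{θ,v₂}(0,∞)`. -/
def DualHardyBounded (θ : ℝ≥0∞) (v1 v2 : ℝ → ℝ) : Prop :=
  ∃ C : ℝ≥0, ∀ g : ℝ → ℝ≥0∞, Measurable g → wLpE θ v2 (dualHardyE g) ≤ C * wLpE θ v1 g

/-- Boundedness of the Hardy operator `H` from `L_{θ,v₁}(0,∞)` to `L_{θ,v₂}(0,∞)`. -/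
def HardyBounded (θ : ℝ≥0∞) (v1 v2 : ℝ → ℝ) : Prop :=
  ∃ C : ℝ≥0, ∀ g : ℝ → ℝ≥0∞, Measurable g → wLpE θ v2 (hardyE g) ≤ C * wLpE θ v1 g

/-- The class `Ω_θ`. -/
def OmegaTheta (θ : ℝ≥0∞) (w : ℝ → ℝ) : Prop :=
  Measurable w ∧ (∀ r, 0 ≤ w r) ∧
    ¬ (∀ᵐ r ∂(volume.restrict (Ioi (0 : ℝ))), w r = 0) ∧
    ∃ t > (0 : ℝ), lpNormE θ (fun r => ENNReal.ofReal (w r)) (volume.restrict (Ioi t)) < ∞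

/-- The class `Ω_{p,θ}`. -/
def OmegaPTheta {n : ℕ} (p : Fin n → ℝ≥0∞) (θ : ℝ≥0∞) (w : ℝ → ℝ) : Prop :=
  Measurable w ∧ (∀ r, 0 ≤ w r) ∧
    ¬ (∀ᵐ r ∂(volume.restrict (Ioi (0 : ℝ))), w r = 0) ∧
    (∃ t > (0 : ℝ), lpNormE θ (fun r => ENNReal.ofReal (w r)) (volume.restrict (Ioi t)) < ∞) ∧
    (∃ t > (0 : ℝ), lpNormE θ (fun r => ENNReal.ofReal (w r * r ^ sumInv p))
        (volume.restrict (Ioo (0 : ℝ) t)) < ∞)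

/-- The doubling condition `C⁻¹ w(r) ≤ w(2r) ≤ C w(r)` for all `r > 0`. -/
def Doubling (w : ℝ → ℝ) : Prop :=
  ∃ C : ℝ, 0 < C ∧ ∀ r > (0 : ℝ), C⁻¹ * w r ≤ w (2 * r) ∧ w (2 * r) ≤ C * w r

/-- Conjugate exponent in `ℝ≥0∞`. -/
def conjE (p : ℝ≥0∞) : ℝ≥0∞ := (1 - p⁻¹)⁻¹

/-- `A` is a `(p', w, R)`-block: supported in `Q(0,R)` with `‖A‖_{L^{p'}} ≤ w(R)`. -/
def IsBlock {n : ℕ} (p' : Fin n → ℝ≥0∞) (w : ℝ → ℝ) (R : ℝ)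
    (A : (Fin n → ℝ) → ℝ) : Prop :=
  Measurable A ∧ (∀ x ∉ cube0 n R, A x = 0) ∧
    mixedNorm n p' (fun x => (‖A x‖₊ : ℝ≥0∞)) ≤ ENNReal.ofReal (w R)

/-- `ℓ^q` norm of a `ℤ`-indexed real sequence. -/
def ellNorm (q : ℝ≥0∞) (a : ℤ → ℝ) : ℝ≥0∞ :=
  if q = ∞ then ⨆ j, (‖a j‖₊ : ℝ≥0∞)
  else (∑' j, (‖a j‖₊ : ℝ≥0∞) ^ q.toReal) ^ (1 / q.toReal)

/-- Membership in the local block space `LH_{p' θ', w}`. -/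
def MemLH {n : ℕ} (p' : Fin n → ℝ≥0∞) (θ' : ℝ≥0∞) (w : ℝ → ℝ)
    (g : (Fin n → ℝ) → ℝ) : Prop :=
  ∃ (lam : ℤ → ℝ) (A : ℤ → (Fin n → ℝ) → ℝ),
    (∀ j, IsBlock p' w ((2 : ℝ) ^ j) (A j)) ∧
    (∀ᵐ x, HasSum (fun j => lam j * A j x) (g x)) ∧ ellNorm θ' lam < ∞

/-- The local block space norm `‖g‖_{LH_{p' θ', w}}`. -/
def LHnorm {n : ℕ} (p' : Fin n → ℝ≥0∞) (θ' : ℝ≥0∞) (w : ℝ → ℝ)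
    (g : (Fin n → ℝ) → ℝ) : ℝ≥0∞ :=
  ⨅ (lam : ℤ → ℝ) (A : ℤ → (Fin n → ℝ) → ℝ)
    (_ : (∀ j, IsBlock p' w ((2 : ℝ) ^ j) (A j)) ∧
         ∀ᵐ x, HasSum (fun j => lam j * A j x) (g x)),
    ellNorm θ' lam

/-- `(∫_0^∞ (r^{-λ} A(r))^q dr/r)^{1/q}` (essential supremum when `q = ∞`). -/
def morreyScale (q : ℝ≥0∞) (lam : ℝ) (A : ℝ → ℝ≥0∞) : ℝ≥0∞ :=
  if q = ∞ then essSup (fun r => ENNReal.ofReal (r ^ (-lam)) * A r) (volume.restrict (Ioi (0 : ℝ)))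
  else (∫⁻ r in Ioi (0 : ℝ),
      (ENNReal.ofReal (r ^ (-lam)) * A r) ^ q.toReal * ENNReal.ofReal r⁻¹) ^ (1 / q.toReal)

/-- The local mixed Morrey norm `‖·‖_{LM^λ_{p,q}}` (cubes `Q(0,r)`). -/
def LMlamQ (n : ℕ) (p : Fin n → ℝ≥0∞) (q : ℝ≥0∞) (lam : ℝ)
    (g : (Fin n → ℝ) → ℝ≥0∞) : ℝ≥0∞ :=
  morreyScale q lam (fun r => mixedNormOn n p g (cube0 n r))

/-- The local mixed Morrey norm `‖·‖_{LM^λ_{p,q}}` (balls `B(0,r)`). -/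
def LMlamB (n : ℕ) (p : Fin n → ℝ≥0∞) (q : ℝ≥0∞) (lam : ℝ)
    (g : (Fin n → ℝ) → ℝ≥0∞) : ℝ≥0∞ :=
  morreyScale q lam (fun r => mixedNormOn n p g (closedBall0 n r))

/-- Condition (★) on the auxiliary exponent vector `s`. -/
def StarCond {n : ℕ} (p s : Fin n → ℝ≥0∞) (w : ℝ → ℝ) : Prop :=
  ∃ C : ℝ, ∀ r : ℝ, 0 < r →
    (∫⁻ t in Ioi r,
        ENNReal.ofReal (t ^ (sumInv s / (n : ℝ) - sumInv p / (n : ℝ) - 1) / w (r * t)))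
      ≤ ENNReal.ofReal (C * (r ^ (sumInv p / (n : ℝ) - sumInv s / (n : ℝ)) / w r))

/-- `ℓ^u`-norm (`sup` for `u = ∞`) of an `ℕ`-indexed family in `ℝ≥0∞`. -/
def vecNorm (u : ℝ≥0∞) (a : ℕ → ℝ≥0∞) : ℝ≥0∞ :=
  if u = ∞ then ⨆ j, a j else (∑' j, a j ^ u.toReal) ^ (1 / u.toReal)

/-- Operator norm of the functional `g ↦ ∫ f g` on the local block space. -/
def dualNormOf (n : ℕ) (p : Fin n → ℝ≥0∞) (θ : ℝ≥0∞) (w : ℝ → ℝ)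
    (f : (Fin n → ℝ) → ℝ) : ℝ≥0∞ :=
  ⨆ (g : (Fin n → ℝ) → ℝ) (_ : MemLH (fun i => conjE (p i)) (conjE θ) w g)
    (_ : LHnorm (fun i => conjE (p i)) (conjE θ) w g ≤ 1),
    ENNReal.ofReal |∫ x, f x * g x|

/-- `sup_{t>0} |e^{tΔ}f(x)|` for a (locally integrable) function `f`. -/
def heatSup (n : ℕ) (f : (Fin n → ℝ) → ℝ) (x : Fin n → ℝ) : ℝ≥0∞ :=
  ⨆ (t : ℝ) (_ : 0 < t),
    ENNReal.ofReal
      |∫ y, (4 * Real.pi * t) ^ (-(n : ℝ) / 2) *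
          Real.exp (-(∑ i, (x i - y i) ^ 2) / (4 * t)) * f y|

/-- The Schwartz seminorm `ρ_N`. -/
def rhoN {n : ℕ} (N : ℕ) (φ : SchwartzMap (Fin n → ℝ) ℝ) : ℝ≥0∞ :=
  ∑ k ∈ Finset.range (N + 1),
    ⨆ x : Fin n → ℝ, ENNReal.ofReal ((1 + euclNorm x) ^ N * ‖iteratedFDeriv ℝ k (⇑φ) x‖)

/-- The grand maximal operator of a (locally integrable) function. -/
def grandMaxF {n : ℕ} (N : ℕ) (f : (Fin n → ℝ) → ℝ) (x : Fin n → ℝ) : ℝ≥0∞ :=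
  ⨆ (φ : SchwartzMap (Fin n → ℝ) ℝ) (_ : rhoN N φ ≤ 1) (t : ℝ) (_ : 0 < t),
    ENNReal.ofReal |∫ y, t ^ (-(n : ℝ)) * φ (fun i => (x i - y i) / t) * f y|

/-- The `n`-dimensional Hardy operator `Hf(x) = |x|^{-n} ∫_{|y|<|x|} f(y) dy`. -/
def hardyOp {n : ℕ} (f : (Fin n → ℝ) → ℝ) (x : Fin n → ℝ) : ℝ :=
  (euclNorm x) ^ (-(n : ℝ)) * ∫ y in {y : Fin n → ℝ | euclNorm y < euclNorm x}, f y

end LMM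

open LMM

/-- The dyadic annulus `A_j = B_j ∖ B_{j-1}`. -/
def annulus (n : ℕ) (j : ℤ) : Set (Fin n → ℝ) :=
  closedBall0 n ((2 : ℝ) ^ j) \ closedBall0 n ((2 : ℝ) ^ (j - 1))

/-- The homogeneous mixed Herz norm `‖f‖_{K̇^{α,θ}_{p}}`. -/
def herzNormC (n : ℕ) (p : Fin n → ℝ≥0∞) (θ : ℝ≥0∞) (alpha : ℝ)
    (f : (Fin n → ℝ) → ℂ) : ℝ≥0∞ :=
  if θ = ∞ then
    ⨆ j : ℤ, ENNReal.ofReal ((2 : ℝ) ^ (alpha * (j : ℝ))) *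
      mixedNormOn n p (fun x => (‖f x‖₊ : ℝ≥0∞)) (annulus n j)
  else
    (∑' j : ℤ, (ENNReal.ofReal ((2 : ℝ) ^ (alpha * (j : ℝ))) *
      mixedNormOn n p (fun x => (‖f x‖₊ : ℝ≥0∞)) (annulus n j)) ^ θ.toReal) ^ (1 / θ.toReal)


namespace LMM

lemma ennrpow_iSup {ι : Sort*} (f : ι → ℝ≥0∞) {s : ℝ} (hs : 0 < s) :
    (⨆ i, f i) ^ s = ⨆ i, (f i) ^ s := by
  apply le_antisymm
  · have h : ∀ i, f i ≤ (⨆ i, (f i) ^ s) ^ (1/s) := by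
      intro i
      have := ENNReal.rpow_le_rpow (le_iSup (fun i => (f i)^s) i) (by positivity : (0:ℝ) ≤ 1/s)
      rwa [← ENNReal.rpow_mul, mul_one_div, div_self hs.ne', ENNReal.rpow_one] at this
    have := ENNReal.rpow_le_rpow (iSup_le h) hs.le
    rwa [← ENNReal.rpow_mul, one_div_mul_cancel hs.ne', ENNReal.rpow_one] at this
  · exact iSup_le fun i => ENNReal.rpow_le_rpow (le_iSup f i) hs.le

variable {μ : Measure ℝ}

lemma lpNormE_mono {q : ℝ≥0∞} {g g' : ℝ → ℝ≥0∞} (h : ∀ᵐ x ∂μ, g x ≤ g' x) :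
    lpNormE q g μ ≤ lpNormE q g' μ := by
  unfold lpNormE
  split
  · exact essSup_mono_ae h
  · refine ENNReal.rpow_le_rpow (lintegral_mono_ae ?_) (by positivity)
    exact h.mono fun x hx => ENNReal.rpow_le_rpow hx ENNReal.toReal_nonneg

lemma lpNormE_congr_ae {q : ℝ≥0∞} {g g' : ℝ → ℝ≥0∞} (h : ∀ᵐ x ∂μ, g x = g' x) :
    lpNormE q g μ = lpNormE q g' μ :=
  le_antisymm (lpNormE_mono (h.mono fun _ hx => hx.le))
    (lpNormE_mono (h.mono fun _ hx => hx.ge))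

lemma lpNormE_zero {q : ℝ≥0∞} (hq : q ≠ 0) : lpNormE q (fun _ => 0) μ = 0 := by
  unfold lpNormE
  split
  · exact le_antisymm (essSup_le_of_ae_le 0 (Eventually.of_forall fun _ => le_rfl)) (zero_le)
  · next hq' =>
    have hs : 0 < q.toReal := ENNReal.toReal_pos hq hq'
    simp only [ENNReal.zero_rpow_of_pos hs, lintegral_zero]
    exact ENNReal.zero_rpow_of_pos (by positivity)

lemma lpNormE_const_mul {q : ℝ≥0∞} (hq : q ≠ 0) {c : ℝ≥0∞} (hc : c ≠ ∞) (g : ℝ → ℝ≥0∞) :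
    lpNormE q (fun x => c * g x) μ = c * lpNormE q g μ := by
  unfold lpNormE
  split
  · exact ENNReal.essSup_const_mul
  · next hq' =>
    have hs : 0 < q.toReal := ENNReal.toReal_pos hq hq'
    rw [show (∫⁻ t, (c * g t) ^ q.toReal ∂μ) = c ^ q.toReal * ∫⁻ t, (g t) ^ q.toReal ∂μ by
        rw [← lintegral_const_mul' _ _ (by simp [ENNReal.rpow_ne_top_of_nonneg hs.le hc])]
        simp_rw [ENNReal.mul_rpow_of_nonneg _ _ hs.le],
      ENNReal.mul_rpow_of_nonneg _ _ (by positivity : (0:ℝ) ≤ 1/q.toReal),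
      ← ENNReal.rpow_mul, mul_one_div, div_self hs.ne', ENNReal.rpow_one]

lemma lpNormE_add_le {q : ℝ≥0∞} (hq : 1 ≤ q) {g₁ g₂ : ℝ → ℝ≥0∞}
    (h₁ : AEMeasurable g₁ μ) (h₂ : AEMeasurable g₂ μ) :
    lpNormE q (fun x => g₁ x + g₂ x) μ ≤ lpNormE q g₁ μ + lpNormE q g₂ μ := by
  unfold lpNormE
  split
  · refine essSup_le_of_ae_le _ ?_
    filter_upwards [ae_le_essSup g₁, ae_le_essSup g₂] with x hx1 hx2
    exact add_le_add hx1 hx2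
  · next hq' =>
    exact ENNReal.lintegral_Lp_add_le h₁ h₂ (by
      simpa using ENNReal.toReal_mono hq' hq)

lemma lint_Lp_tsum_le {α : Type*} [MeasurableSpace α] {ν : Measure α} {s : ℝ} (hs : 1 ≤ s)
    {g : ℕ → α → ℝ≥0∞} (hg : ∀ k, AEMeasurable (g k) ν) :
    (∫⁻ x, (∑' k, g k x) ^ s ∂ν) ^ (1/s) ≤ ∑' k, (∫⁻ x, (g k x) ^ s ∂ν) ^ (1/s) := by
  have hs0 : 0 < s := lt_of_lt_of_le one_pos hs
  set S : ℕ → α → ℝ≥0∞ := fun N x => ∑ k ∈ Finset.range N, g k x with hS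
  have hSmeas : ∀ N, AEMeasurable (S N) ν := fun N =>
    Finset.aemeasurable_fun_sum _ fun k _ => hg k
  have hfin : ∀ N, (∫⁻ x, (S N x) ^ s ∂ν) ^ (1/s) ≤
      ∑ k ∈ Finset.range N, (∫⁻ x, (g k x) ^ s ∂ν) ^ (1/s) := by
    intro N
    induction N with
    | zero =>
      simp only [hS, Finset.range_zero, Finset.sum_empty]
      rw [show (∫⁻ x, (0:ℝ≥0∞) ^ s ∂ν) = 0 by
          rw [ENNReal.zero_rpow_of_pos hs0, lintegral_zero],
        ENNReal.zero_rpow_of_pos (one_div_pos.mpr hs0)]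
    | succ N ih =>
      have : ∀ x, S (N+1) x = S N x + g N x := fun x => Finset.sum_range_succ _ _
      simp_rw [this]
      calc (∫⁻ x, (S N x + g N x) ^ s ∂ν) ^ (1/s)
          ≤ (∫⁻ x, (S N x) ^ s ∂ν) ^ (1/s) + (∫⁻ x, (g N x) ^ s ∂ν) ^ (1/s) :=
            ENNReal.lintegral_Lp_add_le (hSmeas N) (hg N) hs
        _ ≤ _ := by rw [Finset.sum_range_succ]; exact add_le_add ih le_rfl
  have hpt : ∀ x, (∑' k, g k x) = ⨆ N, S N x := fun x => ENNReal.tsum_eq_iSup_nat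
  have hmono : ∀ᵐ x ∂ν, Monotone fun N => (S N x) ^ s := by
    refine Eventually.of_forall fun x N M hNM => ?_
    exact ENNReal.rpow_le_rpow (Finset.sum_le_sum_of_subset (Finset.range_subset_range.2 hNM)) hs0.le
  calc (∫⁻ x, (∑' k, g k x) ^ s ∂ν) ^ (1/s)
      = (∫⁻ x, ⨆ N, (S N x) ^ s ∂ν) ^ (1/s) := by
        simp_rw [hpt]
        congr 1
        exact lintegral_congr fun x => ennrpow_iSup _ hs0
    _ = (⨆ N, ∫⁻ x, (S N x) ^ s ∂ν) ^ (1/s) := by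
        rw [lintegral_iSup' (fun N => (hSmeas N).pow_const _) hmono]
    _ = ⨆ N, (∫⁻ x, (S N x) ^ s ∂ν) ^ (1/s) := ennrpow_iSup _ (one_div_pos.mpr hs0)
    _ ≤ ⨆ N, ∑ k ∈ Finset.range N, (∫⁻ x, (g k x) ^ s ∂ν) ^ (1/s) := iSup_mono hfin
    _ ≤ ∑' k, (∫⁻ x, (g k x) ^ s ∂ν) ^ (1/s) := iSup_le fun N => ENNReal.sum_le_tsum _

lemma lpNormE_tsum_le {q : ℝ≥0∞} (hq : 1 ≤ q) {g : ℕ → ℝ → ℝ≥0∞}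
    (hg : ∀ k, AEMeasurable (g k) μ) :
    lpNormE q (fun x => ∑' k, g k x) μ ≤ ∑' k, lpNormE q (g k) μ := by
  by_cases hq' : q = ∞
  · subst hq'
    simp only [lpNormE, if_pos rfl]
    refine essSup_le_of_ae_le _ ?_
    have h : ∀ᵐ x ∂μ, ∀ k, g k x ≤ essSup (g k) μ := ae_all_iff.2 fun k => ae_le_essSup (g k)
    exact h.mono fun x hx => ENNReal.tsum_le_tsum fun k => hx k
  · have hs : 1 ≤ q.toReal := by simpa using ENNReal.toReal_mono hq' hq
    simp only [lpNormE, if_neg hq']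
    exact lint_Lp_tsum_le hs hg

lemma measurable_snoc {n : ℕ} :
    Measurable fun q : (Fin n → ℝ) × ℝ => (Fin.snoc q.1 q.2 : Fin (n+1) → ℝ) := by
  refine measurable_pi_lambda _ fun i => ?_
  induction i using Fin.lastCases with
  | last => simpa [Fin.snoc_last] using measurable_snd
  | cast j => simpa [Fin.snoc_castSucc, Function.comp_def] using (measurable_pi_apply j).comp measurable_fst

lemma measurable_mixedNorm_param {β : Type*} [MeasurableSpace β] :
    ∀ (n : ℕ) (p : Fin n → ℝ≥0∞), (∀ i, p i ≠ ∞) →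
    ∀ h : (Fin n → ℝ) → β → ℝ≥0∞, Measurable (Function.uncurry h) →
    Measurable fun b => mixedNorm n p (fun x => h x b)
  | 0, p, _, h, hm => by
    simp only [mixedNorm]
    exact hm.comp (measurable_const.prodMk measurable_id)
  | (n+1), p, hp, h, hm => by
    simp only [mixedNorm, lpNormE, if_neg (hp (Fin.last n))]
    have hF : Measurable (Function.uncurry
        fun (x : Fin n → ℝ) (tb : ℝ × β) => h (Fin.snoc x tb.1) tb.2) := by
      have : Measurable fun q : (Fin n → ℝ) × (ℝ × β) =>
          ((Fin.snoc q.1 q.2.1 : Fin (n+1) → ℝ), q.2.2) :=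
        (measurable_snoc.comp (measurable_fst.prodMk (measurable_fst.comp measurable_snd))).prodMk
          (measurable_snd.comp measurable_snd)
      exact hm.comp this
    have hI := measurable_mixedNorm_param n (fun i => p i.castSucc) (fun i => hp _) _ hF
    have hG : Measurable fun q : β × ℝ =>
        (mixedNorm n (fun i => p i.castSucc) fun x => h (Fin.snoc x q.2) q.1)
          ^ (p (Fin.last n)).toReal := by
      have := hI.comp (measurable_swap : Measurable fun q : β × ℝ => (q.2, q.1))
      exact this.pow_const _
    refine Measurable.pow_const ?_ _
    exact Measurable.lintegral_prod_right
      (f := fun b t => (mixedNorm n (fun i => p i.castSucc)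
        fun x => h (Fin.snoc x t) b) ^ (p (Fin.last n)).toReal) hG

lemma mixedNorm_mono : ∀ (n : ℕ) (p : Fin n → ℝ≥0∞) {g g' : (Fin n → ℝ) → ℝ≥0∞},
    (∀ x, g x ≤ g' x) → mixedNorm n p g ≤ mixedNorm n p g'
  | 0, p, g, g', h => h _
  | (n+1), p, g, g', h => by
    simp only [mixedNorm]
    refine lpNormE_mono (Eventually.of_forall fun t => ?_)
    exact mixedNorm_mono n _ fun x => h _

lemma mixedNorm_zero : ∀ (n : ℕ) (p : Fin n → ℝ≥0∞), (∀ i, p i ≠ 0) →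
    mixedNorm n p (fun _ => (0:ℝ≥0∞)) = 0
  | 0, p, _ => rfl
  | (n+1), p, hp => by
    simp only [mixedNorm]
    show lpNormE (p (Fin.last n))
      (fun _t : ℝ => mixedNorm n (fun i => p i.castSucc) (fun _ => (0:ℝ≥0∞))) volume = 0
    rw [show (fun _t : ℝ => mixedNorm n (fun i => p i.castSucc)
        (fun _ : Fin n → ℝ => (0:ℝ≥0∞))) = fun _ => (0:ℝ≥0∞)
      from funext fun _ => mixedNorm_zero n _ fun i => hp _]
    exact lpNormE_zero (hp _)

lemma mixedNorm_tsum_le : ∀ (n : ℕ) (p : Fin n → ℝ≥0∞), (∀ i, 1 ≤ p i ∧ p i ≠ ∞) →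
    ∀ (g : ℕ → (Fin n → ℝ) → ℝ≥0∞), (∀ k, Measurable (g k)) →
    mixedNorm n p (fun x => ∑' k, g k x) ≤ ∑' k, mixedNorm n p (g k)
  | 0, p, _, g, _ => le_of_eq rfl
  | (n+1), p, hp, g, hg => by
    simp only [mixedNorm]
    calc lpNormE (p (Fin.last n)) (fun t => mixedNorm n (fun i => p i.castSucc)
            fun x => ∑' k, g k (Fin.snoc x t)) volume
        ≤ lpNormE (p (Fin.last n)) (fun t => ∑' k, mixedNorm n (fun i => p i.castSucc)
            fun x => g k (Fin.snoc x t)) volume := by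
          refine lpNormE_mono (Eventually.of_forall fun t => ?_)
          exact mixedNorm_tsum_le n _ (fun i => hp _) _
            (fun k => (hg k).comp (measurable_snoc.comp
              (measurable_id.prodMk measurable_const)))
      _ ≤ ∑' k, lpNormE (p (Fin.last n)) (fun t => mixedNorm n (fun i => p i.castSucc)
            fun x => g k (Fin.snoc x t)) volume := by
          refine lpNormE_tsum_le (hp (Fin.last n)).1 fun k => Measurable.aemeasurable ?_
          exact measurable_mixedNorm_param n _ (fun i => (hp _).2)
            (fun x t => g k (Fin.snoc x t)) ((hg k).comp measurable_snoc)

lemma mixedNorm_add_le : ∀ (n : ℕ) (p : Fin n → ℝ≥0∞), (∀ i, 1 ≤ p i ∧ p i ≠ ∞) →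
    ∀ (g₁ g₂ : (Fin n → ℝ) → ℝ≥0∞), Measurable g₁ → Measurable g₂ →
    mixedNorm n p (fun x => g₁ x + g₂ x) ≤ mixedNorm n p g₁ + mixedNorm n p g₂
  | 0, p, _, g₁, g₂, _, _ => le_of_eq rfl
  | (n+1), p, hp, g₁, g₂, h₁, h₂ => by
    simp only [mixedNorm]
    calc lpNormE (p (Fin.last n)) (fun t => mixedNorm n (fun i => p i.castSucc)
            fun x => g₁ (Fin.snoc x t) + g₂ (Fin.snoc x t)) volume
        ≤ lpNormE (p (Fin.last n)) (fun t =>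
            (mixedNorm n (fun i => p i.castSucc) fun x => g₁ (Fin.snoc x t)) +
            (mixedNorm n (fun i => p i.castSucc) fun x => g₂ (Fin.snoc x t))) volume := by
          refine lpNormE_mono (Eventually.of_forall fun t => ?_)
          exact mixedNorm_add_le n _ (fun i => hp _) _ _
            (h₁.comp (measurable_snoc.comp (measurable_id.prodMk measurable_const)))
            (h₂.comp (measurable_snoc.comp (measurable_id.prodMk measurable_const)))
      _ ≤ _ := by
          refine lpNormE_add_le (hp (Fin.last n)).1 ?_ ?_ <;>
          · refine Measurable.aemeasurable ?_
            first
            | exact measurable_mixedNorm_param n _ (fun i => (hp _).2)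
                (fun x t => g₁ (Fin.snoc x t)) (h₁.comp measurable_snoc)
            | exact measurable_mixedNorm_param n _ (fun i => (hp _).2)
                (fun x t => g₂ (Fin.snoc x t)) (h₂.comp measurable_snoc)

lemma measurable_euclNorm {n : ℕ} : Measurable (euclNorm (n := n)) := by
  have : Measurable fun x : Fin n → ℝ => ∑ i, x i ^ 2 :=
    Finset.measurable_sum _ fun i _ => (measurable_pi_apply i).pow_const 2
  exact (Real.continuous_sqrt.measurable).comp this

lemma measurableSet_closedBall0 {n : ℕ} (r : ℝ) : MeasurableSet (closedBall0 n r) :=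
  measurable_euclNorm measurableSet_Iic

lemma measurableSet_annulus {n : ℕ} (j : ℤ) : MeasurableSet (annulus n j) :=
  (measurableSet_closedBall0 _).diff (measurableSet_closedBall0 _)

lemma euclNorm_pos {n : ℕ} {x : Fin n → ℝ} (hx : x ≠ 0) : 0 < euclNorm x := by
  obtain ⟨i, hi⟩ := Function.ne_iff.1 hx
  refine Real.sqrt_pos.2 (Finset.sum_pos' (fun i _ => sq_nonneg _) ⟨i, Finset.mem_univ i, ?_⟩)
  exact sq_pos_of_ne_zero hi

lemma mixedNormOn_mono_set {n : ℕ} (p : Fin n → ℝ≥0∞) (g : (Fin n → ℝ) → ℝ≥0∞)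
    {S S' : Set (Fin n → ℝ)} (h : S ⊆ S') : mixedNormOn n p g S ≤ mixedNormOn n p g S' :=
  mixedNorm_mono n p fun x => Set.indicator_le_indicator_of_subset h (fun _ => zero_le) x

lemma mixedNorm_singleton_support {n : ℕ} (p : Fin (n+1) → ℝ≥0∞) (hp : ∀ i, p i ≠ 0)
    {g : (Fin (n+1) → ℝ) → ℝ≥0∞} (c : Fin (n+1) → ℝ) (h : ∀ x, x ≠ c → g x = 0) :
    mixedNorm (n+1) p g = 0 := by
  simp only [mixedNorm]
  have h0 : ∀ᵐ t : ℝ, t ≠ c (Fin.last n) := by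
    rw [ae_iff]
    simpa using measure_singleton (c (Fin.last n))
  have hae : ∀ᵐ t : ℝ, mixedNorm n (fun i => p i.castSucc)
      (fun x => g (Fin.snoc x t)) = (0:ℝ≥0∞) := by
    refine h0.mono fun t ht => ?_
    rw [show (fun x : Fin n → ℝ => g (Fin.snoc x t)) = fun _ => 0 from
      funext fun x => h _ fun hc => ht (by rw [← hc, Fin.snoc_last])]
    exact mixedNorm_zero n _ fun i => hp _
  rw [lpNormE_congr_ae hae]
  exact lpNormE_zero (hp _)

lemma ball_le_tsum_annulus {m : ℕ} (p : Fin (m+1) → ℝ≥0∞) (hp : ∀ i, 1 ≤ p i ∧ p i ≠ ∞)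
    {g : (Fin (m+1) → ℝ) → ℝ≥0∞} (hg : Measurable g) (j : ℤ) :
    mixedNormOn (m+1) p g (closedBall0 (m+1) ((2:ℝ)^j)) ≤
      ∑' k : ℕ, mixedNormOn (m+1) p g (annulus (m+1) (j - (k:ℤ))) := by
  have hp0 : ∀ i, p i ≠ 0 := fun i => fun h => by simpa [h] using (hp i).1
  have hpt : ∀ x, (closedBall0 (m+1) ((2:ℝ)^j)).indicator g x ≤
      (fun y => ∑' k : ℕ, (annulus (m+1) (j - (k:ℤ))).indicator g y) x +
      ({(0 : Fin (m+1) → ℝ)} : Set _).indicator g x := by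
    intro x
    by_cases hxB : x ∈ closedBall0 (m+1) ((2:ℝ)^j)
    · by_cases hx0 : x = 0
      · rw [Set.indicator_of_mem hxB]
        refine le_add_left (le_of_eq ?_)
        rw [Set.indicator_of_mem (by simp [hx0])]
      · obtain ⟨k, hk⟩ := exists_mem_Ioc_zpow (euclNorm_pos hx0) (one_lt_two (α := ℝ))
        have hxB' : euclNorm x ≤ (2:ℝ)^j := hxB
        have hkj : k + 1 ≤ j := by
          have h1 : (2:ℝ)^k < 2^j := lt_of_lt_of_le hk.1 hxB'
          have := (zpow_lt_zpow_iff_right₀ (one_lt_two (α := ℝ))).1 h1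
          omega
        have hxA : x ∈ annulus (m+1) (k+1) := by
          refine ⟨hk.2, fun hmem => ?_⟩
          have : euclNorm x ≤ (2:ℝ)^(k+1-1) := hmem
          rw [show k+1-1 = k by omega] at this
          exact absurd this (not_le.2 hk.1)
        set K : ℕ := (j - (k+1)).toNat with hKdef
        have hK : j - (K:ℤ) = k+1 := by
          have := Int.toNat_of_nonneg (by omega : (0:ℤ) ≤ j - (k+1))
          omega
        rw [Set.indicator_of_mem hxB]
        refine le_add_right ?_
        have : g x = (annulus (m+1) (j - (K:ℤ))).indicator g x := by
          rw [Set.indicator_of_mem (by rw [hK]; exact hxA)]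
        rw [this]
        exact ENNReal.le_tsum K
    · rw [Set.indicator_of_notMem hxB]
      exact zero_le
  calc mixedNormOn (m+1) p g (closedBall0 (m+1) ((2:ℝ)^j))
      ≤ mixedNorm (m+1) p (fun x =>
          (fun y => ∑' k : ℕ, (annulus (m+1) (j - (k:ℤ))).indicator g y) x +
          ({(0 : Fin (m+1) → ℝ)} : Set _).indicator g x) :=
        mixedNorm_mono _ p hpt
    _ ≤ mixedNorm (m+1) p (fun y => ∑' k : ℕ, (annulus (m+1) (j - (k:ℤ))).indicator g y) +
        mixedNorm (m+1) p (({(0 : Fin (m+1) → ℝ)} : Set _).indicator g) :=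
        mixedNorm_add_le _ p hp _ _
          (Measurable.ennreal_tsum fun k => hg.indicator (measurableSet_annulus _))
          (hg.indicator (measurableSet_singleton _))
    _ ≤ (∑' k : ℕ, mixedNormOn (m+1) p g (annulus (m+1) (j - (k:ℤ)))) + 0 := by
        refine add_le_add ?_ (le_of_eq ?_)
        · exact mixedNorm_tsum_le _ p hp _ fun k => hg.indicator (measurableSet_annulus _)
        · exact mixedNorm_singleton_support p hp0 0 fun x hx =>
            Set.indicator_of_notMem (by simpa using hx) _
    _ = _ := add_zero _

lemma two_zpow_pos' (j : ℤ) : (0:ℝ) < (2:ℝ)^j := zpow_pos (by norm_num) j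

lemma two_zpow_rpow (lam : ℝ) (i : ℤ) : ((2:ℝ)^(i:ℤ))^(-lam) = (2:ℝ)^(-lam * (i:ℝ)) := by
  rw [← Real.rpow_intCast 2 i, ← Real.rpow_mul (by norm_num : (0:ℝ) ≤ 2)]
  congr 1; ring

lemma rpow_neg_anti {lam a b : ℝ} (hl : 0 ≤ lam) (ha : 0 < a) (hab : a ≤ b) :
    b^(-lam) ≤ a^(-lam) := by
  rw [Real.rpow_neg ha.le, Real.rpow_neg (ha.trans_le hab).le]
  exact inv_anti₀ (Real.rpow_pos_of_pos ha _) (Real.rpow_le_rpow ha.le hab hl)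

lemma rexp_split (lam : ℝ) (i : ℤ) (k : ℕ) :
    (2:ℝ)^(-lam * ((i:ℤ):ℝ)) = ((2:ℝ)^(-lam))^k * (2:ℝ)^(-lam * ((i - (k:ℤ) : ℤ):ℝ)) := by
  rw [← Real.rpow_natCast ((2:ℝ)^(-lam)) k, ← Real.rpow_mul (by norm_num : (0:ℝ) ≤ 2),
    ← Real.rpow_add (by norm_num : (0:ℝ) < 2)]
  congr 1; push_cast; ring

lemma hardy_bound {m : ℕ} (p : Fin (m+1) → ℝ≥0∞) (hp : ∀ i, 1 ≤ p i ∧ p i ≠ ∞) (lam : ℝ)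
    {g : (Fin (m+1) → ℝ) → ℝ≥0∞} (hg : Measurable g) (i : ℤ) :
    ENNReal.ofReal ((2:ℝ)^(-lam * (i:ℝ))) *
        mixedNormOn (m+1) p g (closedBall0 (m+1) ((2:ℝ)^i)) ≤
      ∑' k : ℕ, ENNReal.ofReal (((2:ℝ)^(-lam))^k) *
        (ENNReal.ofReal ((2:ℝ)^(-lam * ((i - (k:ℤ) : ℤ):ℝ))) *
          mixedNormOn (m+1) p g (annulus (m+1) (i - (k:ℤ)))) := by
  calc ENNReal.ofReal ((2:ℝ)^(-lam * (i:ℝ))) *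
        mixedNormOn (m+1) p g (closedBall0 (m+1) ((2:ℝ)^i))
      ≤ ENNReal.ofReal ((2:ℝ)^(-lam * (i:ℝ))) *
        ∑' k : ℕ, mixedNormOn (m+1) p g (annulus (m+1) (i - (k:ℤ))) :=
        mul_le_mul_right (ball_le_tsum_annulus p hp hg i) _
    _ = ∑' k : ℕ, ENNReal.ofReal ((2:ℝ)^(-lam * (i:ℝ))) *
          mixedNormOn (m+1) p g (annulus (m+1) (i - (k:ℤ))) := ENNReal.tsum_mul_left.symm
    _ ≤ _ := by
        refine ENNReal.tsum_le_tsum fun k => le_of_eq ?_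
        rw [rexp_split lam i k, ENNReal.ofReal_mul (by positivity), mul_assoc]

lemma zpow_cover : Ioi (0:ℝ) = ⋃ j : ℤ, Ioc ((2:ℝ)^j) ((2:ℝ)^(j+1)) := by
  ext r
  simp only [mem_Ioi, mem_iUnion, mem_Ioc]
  constructor
  · intro hr
    obtain ⟨j, hj⟩ := exists_mem_Ioc_zpow hr (one_lt_two (α := ℝ))
    exact ⟨j, hj.1, hj.2⟩
  · rintro ⟨j, h1, _⟩
    exact (two_zpow_pos' j).trans h1

lemma zpow_disj : Pairwise (Function.onFun Disjoint fun j : ℤ => Ioc ((2:ℝ)^j) ((2:ℝ)^(j+1))) := by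
  have key : ∀ {j j' : ℤ}, j < j' →
      Disjoint (Ioc ((2:ℝ)^j) ((2:ℝ)^(j+1))) (Ioc ((2:ℝ)^j') ((2:ℝ)^(j'+1))) := by
    intro j j' h
    refine Set.disjoint_left.2 fun r hr hr' => ?_
    have h2 : (2:ℝ)^(j+1) ≤ 2^j' := zpow_le_zpow_right₀ (by norm_num) (by omega)
    exact absurd (hr.2.trans h2) (not_le.2 hr'.1)
  intro j j' hne
  rcases hne.lt_or_gt with h | h
  · exact key h
  · exact (key h).symm

lemma zpow_disj' : Pairwise (Function.onFun Disjoint fun j : ℤ => Ioo ((2:ℝ)^j) ((2:ℝ)^(j+1))) :=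
  fun _ _ h => (zpow_disj h).mono Ioo_subset_Ioc_self Ioo_subset_Ioc_self

section Main

variable {m : ℕ} {p : Fin (m+1) → ℝ≥0∞} {lam : ℝ} {g : (Fin (m+1) → ℝ) → ℝ≥0∞}

lemma ofReal_exp_split (lam : ℝ) (j : ℤ) :
    ENNReal.ofReal ((2:ℝ)^(-lam * (j:ℝ))) =
      ENNReal.ofReal ((2:ℝ)^lam) * ENNReal.ofReal ((2:ℝ)^(-lam * ((j+1:ℤ):ℝ))) := by
  rw [← ENNReal.ofReal_mul (by positivity), ← Real.rpow_add (by norm_num : (0:ℝ) < 2)]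
  congr 1
  push_cast
  ring

lemma ofReal_exp_split' (lam : ℝ) (j : ℤ) :
    ENNReal.ofReal ((2:ℝ)^(-lam * ((j+1:ℤ):ℝ))) =
      ENNReal.ofReal ((2:ℝ)^(-lam)) * ENNReal.ofReal ((2:ℝ)^(-lam * (j:ℝ))) := by
  rw [← ENNReal.ofReal_mul (by positivity), ← Real.rpow_add (by norm_num : (0:ℝ) < 2)]
  congr 1
  push_cast
  ring

lemma geom_sum_eq (hl : 0 < lam) :
    ∑' k : ℕ, ENNReal.ofReal (((2:ℝ)^(-lam))^k) =
      (1 - ENNReal.ofReal ((2:ℝ)^(-lam)))⁻¹ := by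
  have h : ∀ k : ℕ, ENNReal.ofReal (((2:ℝ)^(-lam))^k) =
      (ENNReal.ofReal ((2:ℝ)^(-lam)))^k := fun k =>
    ENNReal.ofReal_pow (by positivity) k
  simp_rw [h]
  exact ENNReal.tsum_geometric _

lemma two_rpow_neg_lt_one (hl : 0 < lam) : ENNReal.ofReal ((2:ℝ)^(-lam)) < 1 := by
  rw [show (1:ℝ≥0∞) = ENNReal.ofReal 1 by simp]
  exact (ENNReal.ofReal_lt_ofReal_iff (by norm_num)).2
    (Real.rpow_lt_one_of_one_lt_of_neg one_lt_two (by linarith))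

lemma K_ne_top (hl : 0 < lam) : (1 - ENNReal.ofReal ((2:ℝ)^(-lam)))⁻¹ ≠ ∞ :=
  ENNReal.inv_ne_top.2 (tsub_pos_of_lt (two_rpow_neg_lt_one hl)).ne'

-- The key per-interval upper bound chain (θ < ∞).
lemma morrey_le_herz_fin (hp : ∀ i, 1 ≤ p i ∧ p i ≠ ∞) (hg : Measurable g)
    (hl : 0 < lam) {s : ℝ} (hs : 1 ≤ s) :
    (∫⁻ r in Ioi (0:ℝ),
        (ENNReal.ofReal (r ^ (-lam)) *
          mixedNormOn (m+1) p g (closedBall0 (m+1) r))^s * ENNReal.ofReal r⁻¹)^(1/s) ≤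
      ENNReal.ofReal ((2:ℝ)^lam) * (1 - ENNReal.ofReal ((2:ℝ)^(-lam)))⁻¹ *
        (∑' j : ℤ, (ENNReal.ofReal ((2:ℝ)^(-lam * (j:ℝ))) *
          mixedNormOn (m+1) p g (annulus (m+1) j))^s)^(1/s) := by
  have hs0 : 0 < s := lt_of_lt_of_le one_pos hs
  set N : ℝ → ℝ≥0∞ := fun r => mixedNormOn (m+1) p g (closedBall0 (m+1) r) with hN
  set b : ℤ → ℝ≥0∞ := fun j => ENNReal.ofReal ((2:ℝ)^(-lam * (j:ℝ))) *
    mixedNormOn (m+1) p g (annulus (m+1) j) with hb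
  set K : ℝ≥0∞ := (1 - ENNReal.ofReal ((2:ℝ)^(-lam)))⁻¹ with hK
  have hNmono : ∀ {r r' : ℝ}, r ≤ r' → N r ≤ N r' := fun h =>
    mixedNormOn_mono_set _ _ (fun x hx => le_trans hx h)
  set T : ℤ → ℝ≥0∞ := fun i => ∑' k : ℕ, ENNReal.ofReal (((2:ℝ)^(-lam))^k) * b (i - (k:ℤ))
    with hT
  -- Step 1: interval bounds
  have hIoc : ∀ j : ℤ,
      (∫⁻ r in Ioc ((2:ℝ)^j) ((2:ℝ)^(j+1)),
        (ENNReal.ofReal (r ^ (-lam)) * N r)^s * ENNReal.ofReal r⁻¹)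
      ≤ (ENNReal.ofReal ((2:ℝ)^(-lam * (j:ℝ))) * N ((2:ℝ)^(j+1)))^s := by
    intro j
    have h2j : (0:ℝ) < 2^j := two_zpow_pos' j
    calc (∫⁻ r in Ioc ((2:ℝ)^j) ((2:ℝ)^(j+1)),
          (ENNReal.ofReal (r ^ (-lam)) * N r)^s * ENNReal.ofReal r⁻¹)
        ≤ ∫⁻ _r in Ioc ((2:ℝ)^j) ((2:ℝ)^(j+1)),
            (ENNReal.ofReal ((2:ℝ)^(-lam * (j:ℝ))) * N ((2:ℝ)^(j+1)))^s *
              ENNReal.ofReal ((2:ℝ)^j)⁻¹ := by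
          refine setLIntegral_mono' measurableSet_Ioc fun r hr => ?_
          refine mul_le_mul ?_ ?_ (zero_le) (zero_le)
          · refine ENNReal.rpow_le_rpow (mul_le_mul ?_ (hNmono hr.2) (zero_le) (zero_le))
              hs0.le
            refine ENNReal.ofReal_le_ofReal ?_
            rw [← two_zpow_rpow lam j]
            exact rpow_neg_anti hl.le h2j hr.1.le
          · exact ENNReal.ofReal_le_ofReal (inv_anti₀ h2j hr.1.le)
      _ = (ENNReal.ofReal ((2:ℝ)^(-lam * (j:ℝ))) * N ((2:ℝ)^(j+1)))^s *
            ENNReal.ofReal ((2:ℝ)^j)⁻¹ * volume (Ioc ((2:ℝ)^j) ((2:ℝ)^(j+1))) :=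
          setLIntegral_const _ _
      _ = (ENNReal.ofReal ((2:ℝ)^(-lam * (j:ℝ))) * N ((2:ℝ)^(j+1)))^s := by
          rw [Real.volume_Ioc, show (2:ℝ)^(j+1) - 2^j = 2^j by
              rw [zpow_add_one₀ (two_ne_zero)]; ring,
            mul_assoc, ← ENNReal.ofReal_mul (by positivity),
            inv_mul_cancel₀ h2j.ne', ENNReal.ofReal_one, mul_one]
  have hI : (∫⁻ r in Ioi (0:ℝ),
      (ENNReal.ofReal (r ^ (-lam)) * N r)^s * ENNReal.ofReal r⁻¹)
      ≤ ∑' j : ℤ, (ENNReal.ofReal ((2:ℝ)^(-lam * (j:ℝ))) * N ((2:ℝ)^(j+1)))^s := by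
    rw [zpow_cover, lintegral_iUnion (fun _ => measurableSet_Ioc) zpow_disj]
    exact ENNReal.tsum_le_tsum hIoc
  -- Step 2: Hardy
  have hterm : ∀ j : ℤ, ENNReal.ofReal ((2:ℝ)^(-lam * (j:ℝ))) * N ((2:ℝ)^(j+1)) ≤
      ENNReal.ofReal ((2:ℝ)^lam) * T (j+1) := by
    intro j
    rw [ofReal_exp_split lam j, mul_assoc]
    exact mul_le_mul_right (hardy_bound p hp lam hg (j+1)) _
  -- Step 3: ℓ^s Minkowski for T
  have hmink : (∑' i : ℤ, T i ^ s)^(1/s) ≤ K * (∑' j : ℤ, b j ^ s)^(1/s) := by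
    have hcount : (∑' i : ℤ, T i ^ s)^(1/s) ≤
        ∑' k : ℕ, (∑' i : ℤ, (ENNReal.ofReal (((2:ℝ)^(-lam))^k) * b (i - (k:ℤ))) ^ s)^(1/s) := by
      have := lint_Lp_tsum_le (ν := (Measure.count : Measure ℤ)) hs
        (g := fun k i => ENNReal.ofReal (((2:ℝ)^(-lam))^k) * b (i - (k:ℤ)))
        (fun k => (measurable_from_top).aemeasurable)
      simpa only [lintegral_count] using this
    refine hcount.trans ?_
    have hk : ∀ k : ℕ, (∑' i : ℤ, (ENNReal.ofReal (((2:ℝ)^(-lam))^k) * b (i - (k:ℤ))) ^ s)^(1/s)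
        = ENNReal.ofReal (((2:ℝ)^(-lam))^k) * (∑' j : ℤ, b j ^ s)^(1/s) := by
      intro k
      have h1 : ∀ i : ℤ, (ENNReal.ofReal (((2:ℝ)^(-lam))^k) * b (i - (k:ℤ))) ^ s =
          ENNReal.ofReal (((2:ℝ)^(-lam))^k) ^ s * b (i - (k:ℤ)) ^ s := fun i =>
        ENNReal.mul_rpow_of_nonneg _ _ hs0.le
      simp_rw [h1]
      rw [ENNReal.tsum_mul_left,
        show (∑' i : ℤ, b (i - (k:ℤ)) ^ s) = ∑' j : ℤ, b j ^ s from
          (Equiv.subRight (k:ℤ)).tsum_eq (fun j => b j ^ s),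
        ENNReal.mul_rpow_of_nonneg _ _ (by positivity : (0:ℝ) ≤ 1/s),
        ← ENNReal.rpow_mul, mul_one_div, div_self hs0.ne', ENNReal.rpow_one]
    simp_rw [hk]
    rw [ENNReal.tsum_mul_right, geom_sum_eq hl]
  -- Combine
  calc (∫⁻ r in Ioi (0:ℝ),
        (ENNReal.ofReal (r ^ (-lam)) * N r)^s * ENNReal.ofReal r⁻¹)^(1/s)
      ≤ (∑' j : ℤ, (ENNReal.ofReal ((2:ℝ)^lam) * T (j+1))^s)^(1/s) := by
        refine ENNReal.rpow_le_rpow (hI.trans (ENNReal.tsum_le_tsum fun j => ?_))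
          (by positivity)
        exact ENNReal.rpow_le_rpow (hterm j) hs0.le
    _ = ENNReal.ofReal ((2:ℝ)^lam) * (∑' i : ℤ, T i ^ s)^(1/s) := by
        have h1 : ∀ j : ℤ, (ENNReal.ofReal ((2:ℝ)^lam) * T (j+1))^s =
            ENNReal.ofReal ((2:ℝ)^lam) ^ s * T (j+1) ^ s := fun j =>
          ENNReal.mul_rpow_of_nonneg _ _ hs0.le
        simp_rw [h1]
        rw [ENNReal.tsum_mul_left,
          show (∑' j : ℤ, T (j+1) ^ s) = ∑' i : ℤ, T i ^ s from
            (Equiv.addRight (1:ℤ)).tsum_eq (fun i => T i ^ s),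
          ENNReal.mul_rpow_of_nonneg _ _ (by positivity : (0:ℝ) ≤ 1/s),
          ← ENNReal.rpow_mul, mul_one_div, div_self hs0.ne', ENNReal.rpow_one]
    _ ≤ ENNReal.ofReal ((2:ℝ)^lam) * (K * (∑' j : ℤ, b j ^ s)^(1/s)) :=
        mul_le_mul_right hmink _
    _ = _ := by rw [← mul_assoc]

end Main

section Main2

variable {m : ℕ} {p : Fin (m+1) → ℝ≥0∞} {lam : ℝ} {g : (Fin (m+1) → ℝ) → ℝ≥0∞}

lemma annulus_subset_ball (j : ℤ) {r : ℝ} (h : (2:ℝ)^j ≤ r) :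
    annulus (m+1) j ⊆ closedBall0 (m+1) r :=
  fun x hx => le_trans hx.1 h

-- pointwise lower bound on `Ioo (2^j) (2^(j+1))`
lemma ptwise_lower (hl : 0 < lam) (j : ℤ) {r : ℝ}
    (hr : r ∈ Ioo ((2:ℝ)^j) ((2:ℝ)^(j+1))) :
    ENNReal.ofReal ((2:ℝ)^(-lam * ((j+1:ℤ):ℝ))) * mixedNormOn (m+1) p g (annulus (m+1) j) ≤
      ENNReal.ofReal (r ^ (-lam)) * mixedNormOn (m+1) p g (closedBall0 (m+1) r) := by
  refine mul_le_mul ?_ ?_ (zero_le) (zero_le)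
  · refine ENNReal.ofReal_le_ofReal ?_
    rw [← two_zpow_rpow lam (j+1)]
    exact rpow_neg_anti hl.le ((two_zpow_pos' j).trans hr.1) hr.2.le
  · exact mixedNormOn_mono_set _ _ (annulus_subset_ball j hr.1.le)

lemma herz_le_morrey_fin (hl : 0 < lam) {s : ℝ} (hs : 1 ≤ s) :
    (∑' j : ℤ, (ENNReal.ofReal ((2:ℝ)^(-lam * (j:ℝ))) *
        mixedNormOn (m+1) p g (annulus (m+1) j))^s)^(1/s) ≤
      (((ENNReal.ofReal ((2:ℝ)^(-lam)))^s * ENNReal.ofReal 2⁻¹)⁻¹)^(1/s) *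
      (∫⁻ r in Ioi (0:ℝ),
        (ENNReal.ofReal (r ^ (-lam)) *
          mixedNormOn (m+1) p g (closedBall0 (m+1) r))^s * ENNReal.ofReal r⁻¹)^(1/s) := by
  have hs0 : 0 < s := lt_of_lt_of_le one_pos hs
  set b : ℤ → ℝ≥0∞ := fun j => ENNReal.ofReal ((2:ℝ)^(-lam * (j:ℝ))) *
    mixedNormOn (m+1) p g (annulus (m+1) j) with hb
  set c : ℝ≥0∞ := (ENNReal.ofReal ((2:ℝ)^(-lam)))^s * ENNReal.ofReal 2⁻¹ with hc
  have hc0 : c ≠ 0 := by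
    refine mul_ne_zero ?_ (by simp)
    have : (0:ℝ≥0∞) < ENNReal.ofReal ((2:ℝ)^(-lam)) := ENNReal.ofReal_pos.2 (by positivity)
    simp [ENNReal.rpow_eq_zero_iff, this.ne', ENNReal.ofReal_ne_top]
  have hcne : c ≠ ∞ := by
    refine ENNReal.mul_ne_top ?_ ENNReal.ofReal_ne_top
    exact ENNReal.rpow_ne_top_of_nonneg hs0.le ENNReal.ofReal_ne_top
  have hkey : ∀ j : ℤ, c * b j ^ s ≤
      ∫⁻ r in Ioo ((2:ℝ)^j) ((2:ℝ)^(j+1)),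
        (ENNReal.ofReal (r ^ (-lam)) *
          mixedNormOn (m+1) p g (closedBall0 (m+1) r))^s * ENNReal.ofReal r⁻¹ := by
    intro j
    have h2j : (0:ℝ) < 2^j := two_zpow_pos' j
    have h2j1 : (0:ℝ) < 2^(j+1) := two_zpow_pos' (j+1)
    have heq : c * b j ^ s =
        ((ENNReal.ofReal ((2:ℝ)^(-lam * ((j+1:ℤ):ℝ))) *
          mixedNormOn (m+1) p g (annulus (m+1) j))^s * ENNReal.ofReal ((2:ℝ)^(j+1))⁻¹) *
          volume (Ioo ((2:ℝ)^j) ((2:ℝ)^(j+1))) := by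
      rw [Real.volume_Ioo, show (2:ℝ)^(j+1) - 2^j = 2^j by
          rw [zpow_add_one₀ (two_ne_zero)]; ring]
      simp only [hb, hc]
      rw [mul_right_comm (ENNReal.ofReal ((2:ℝ)^(-lam)) ^ s) (ENNReal.ofReal 2⁻¹),
        ← ENNReal.mul_rpow_of_nonneg _ _ hs0.le,
        ← mul_assoc (ENNReal.ofReal ((2:ℝ)^(-lam))),
        ← ofReal_exp_split' lam j, mul_assoc]
      congr 1
      rw [← ENNReal.ofReal_mul (by positivity)]
      congr 1
      rw [zpow_add_one₀ (two_ne_zero : (2:ℝ) ≠ 0)]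
      field_simp
    rw [heq]
    rw [← setLIntegral_const]
    refine setLIntegral_mono' measurableSet_Ioo fun r hr => ?_
    have hr0 : 0 < r := h2j.trans hr.1
    refine mul_le_mul ?_ ?_ (zero_le) (zero_le)
    · exact ENNReal.rpow_le_rpow (ptwise_lower hl j hr) hs0.le
    · exact ENNReal.ofReal_le_ofReal (inv_anti₀ hr0 hr.2.le)
  have hsum : c * (∑' j : ℤ, b j ^ s) ≤
      ∫⁻ r in Ioi (0:ℝ),
        (ENNReal.ofReal (r ^ (-lam)) *
          mixedNormOn (m+1) p g (closedBall0 (m+1) r))^s * ENNReal.ofReal r⁻¹ := by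
    rw [← ENNReal.tsum_mul_left]
    refine le_trans (ENNReal.tsum_le_tsum hkey) ?_
    rw [← lintegral_iUnion (fun _ => measurableSet_Ioo) zpow_disj']
    refine lintegral_mono_set (iUnion_subset fun j r hr => ?_)
    exact (two_zpow_pos' j).trans hr.1
  have hfinal : (∑' j : ℤ, b j ^ s) ≤ c⁻¹ *
      ∫⁻ r in Ioi (0:ℝ),
        (ENNReal.ofReal (r ^ (-lam)) *
          mixedNormOn (m+1) p g (closedBall0 (m+1) r))^s * ENNReal.ofReal r⁻¹ := by
    rw [show (∑' j : ℤ, b j ^ s) = c⁻¹ * (c * ∑' j : ℤ, b j ^ s) by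
      rw [← mul_assoc, ENNReal.inv_mul_cancel hc0 hcne, one_mul]]
    exact mul_le_mul_right hsum _
  calc (∑' j : ℤ, b j ^ s)^(1/s)
      ≤ (c⁻¹ * ∫⁻ r in Ioi (0:ℝ),
          (ENNReal.ofReal (r ^ (-lam)) *
            mixedNormOn (m+1) p g (closedBall0 (m+1) r))^s * ENNReal.ofReal r⁻¹)^(1/s) :=
        ENNReal.rpow_le_rpow hfinal (by positivity)
    _ = _ := ENNReal.mul_rpow_of_nonneg _ _ (by positivity)

lemma morrey_le_herz_top (hp : ∀ i, 1 ≤ p i ∧ p i ≠ ∞) (hg : Measurable g) (hl : 0 < lam) :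
    essSup (fun r => ENNReal.ofReal (r ^ (-lam)) *
        mixedNormOn (m+1) p g (closedBall0 (m+1) r)) (volume.restrict (Ioi (0:ℝ))) ≤
      ENNReal.ofReal ((2:ℝ)^lam) * (1 - ENNReal.ofReal ((2:ℝ)^(-lam)))⁻¹ *
        ⨆ j : ℤ, ENNReal.ofReal ((2:ℝ)^(-lam * (j:ℝ))) *
          mixedNormOn (m+1) p g (annulus (m+1) j) := by
  set b : ℤ → ℝ≥0∞ := fun j => ENNReal.ofReal ((2:ℝ)^(-lam * (j:ℝ))) *
    mixedNormOn (m+1) p g (annulus (m+1) j) with hb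
  set N : ℝ → ℝ≥0∞ := fun r => mixedNormOn (m+1) p g (closedBall0 (m+1) r) with hN
  have hNmono : ∀ {r r' : ℝ}, r ≤ r' → N r ≤ N r' := fun h =>
    mixedNormOn_mono_set _ _ (fun x hx => le_trans hx h)
  refine essSup_le_of_ae_le _ ?_
  filter_upwards [ae_restrict_mem measurableSet_Ioi] with r hr
  obtain ⟨j, hj⟩ := exists_mem_Ioc_zpow (hr : (0:ℝ) < r) (one_lt_two (α := ℝ))
  have h2j : (0:ℝ) < 2^j := two_zpow_pos' j
  calc ENNReal.ofReal (r ^ (-lam)) * N r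
      ≤ ENNReal.ofReal ((2:ℝ)^(-lam * (j:ℝ))) * N ((2:ℝ)^(j+1)) := by
        refine mul_le_mul ?_ (hNmono hj.2) (zero_le) (zero_le)
        refine ENNReal.ofReal_le_ofReal ?_
        rw [← two_zpow_rpow lam j]
        exact rpow_neg_anti hl.le h2j hj.1.le
    _ ≤ ENNReal.ofReal ((2:ℝ)^lam) * ∑' k : ℕ, ENNReal.ofReal (((2:ℝ)^(-lam))^k) *
          (ENNReal.ofReal ((2:ℝ)^(-lam * ((j+1-(k:ℤ):ℤ):ℝ))) *
            mixedNormOn (m+1) p g (annulus (m+1) (j+1-(k:ℤ)))) := by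
        rw [ofReal_exp_split lam j, mul_assoc]
        exact mul_le_mul_right (hardy_bound p hp lam hg (j+1)) _
    _ ≤ ENNReal.ofReal ((2:ℝ)^lam) * ∑' k : ℕ, ENNReal.ofReal (((2:ℝ)^(-lam))^k) *
          ⨆ i : ℤ, b i := by
        refine mul_le_mul_right (ENNReal.tsum_le_tsum fun k => ?_) _
        exact mul_le_mul_right (le_iSup b (j+1-(k:ℤ))) _
    _ = _ := by
        rw [ENNReal.tsum_mul_right, geom_sum_eq hl, mul_assoc]

lemma herz_le_morrey_top (hl : 0 < lam) :
    (⨆ j : ℤ, ENNReal.ofReal ((2:ℝ)^(-lam * (j:ℝ))) *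
        mixedNormOn (m+1) p g (annulus (m+1) j)) ≤
      ENNReal.ofReal ((2:ℝ)^lam) *
      essSup (fun r => ENNReal.ofReal (r ^ (-lam)) *
        mixedNormOn (m+1) p g (closedBall0 (m+1) r)) (volume.restrict (Ioi (0:ℝ))) := by
  set E := essSup (fun r => ENNReal.ofReal (r ^ (-lam)) *
    mixedNormOn (m+1) p g (closedBall0 (m+1) r)) (volume.restrict (Ioi (0:ℝ))) with hE
  refine iSup_le fun j => ?_
  have h2j : (0:ℝ) < 2^j := two_zpow_pos' j
  have h2j1 : (0:ℝ) < 2^(j+1) := two_zpow_pos' (j+1)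
  have hfreq : ∃ᵐ r ∂(volume.restrict (Ioi (0:ℝ))), r ∈ Ioo ((2:ℝ)^j) ((2:ℝ)^(j+1)) := by
    rw [frequently_ae_mem_iff, Measure.restrict_apply measurableSet_Ioo]
    have hsub : Ioo ((2:ℝ)^j) ((2:ℝ)^(j+1)) ⊆ Ioi (0:ℝ) := fun r hr => (two_zpow_pos' j).trans hr.1
    rw [inter_eq_self_of_subset_left hsub]
    rw [Real.volume_Ioo]
    simp only [ne_eq, ENNReal.ofReal_eq_zero, not_le]
    rw [zpow_add_one₀ (two_ne_zero : (2:ℝ) ≠ 0)]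
    linarith
  obtain ⟨r, hrIoo, hrE⟩ := (hfreq.and_eventually (ENNReal.ae_le_essSup _)).exists
  calc ENNReal.ofReal ((2:ℝ)^(-lam * (j:ℝ))) * mixedNormOn (m+1) p g (annulus (m+1) j)
      = ENNReal.ofReal ((2:ℝ)^lam) * (ENNReal.ofReal ((2:ℝ)^(-lam * ((j+1:ℤ):ℝ))) *
          mixedNormOn (m+1) p g (annulus (m+1) j)) := by
        rw [← mul_assoc, ← ofReal_exp_split lam j]
    _ ≤ ENNReal.ofReal ((2:ℝ)^lam) * E :=
        mul_le_mul_right (le_trans (ptwise_lower hl j hrIoo) hrE) _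

end Main2

end LMM
/-- equivalence of the local mixed Morrey norm `‖·‖_{LM^λ_{p,θ}}`
and the homogeneous mixed Herz norm `‖·‖_{K̇^{-λ,θ}_{p}}`. -/
theorem statement19 (n : ℕ) (p : Fin n → ℝ≥0∞) (θ : ℝ≥0∞) (lam : ℝ)
    (hp : ∀ i, 1 < p i ∧ p i < ∞) (hθ : 1 ≤ θ)
    (hlam0 : 0 < lam) (hlam : lam < sumInv p) :
    ∃ C : ℝ≥0, 0 < C ∧ ∀ f : (Fin n → ℝ) → ℂ, Measurable f →
      (C : ℝ≥0∞)⁻¹ * herzNormC n p θ (-lam) f ≤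
          LMlamB n p θ lam (fun x => (‖f x‖₊ : ℝ≥0∞)) ∧
        LMlamB n p θ lam (fun x => (‖f x‖₊ : ℝ≥0∞)) ≤ C * herzNormC n p θ (-lam) f := by
  cases n with
  | zero =>
    exfalso
    have h0 : sumInv p = 0 := by simp [LMM.sumInv]
    rw [h0] at hlam
    linarith
  | succ m =>
    have hp1 : ∀ i, 1 ≤ p i ∧ p i ≠ ∞ := fun i => ⟨(hp i).1.le, (hp i).2.ne⟩
    obtain ⟨D₁, D₂, hD₁, hD₂, hDf⟩ :
        ∃ D₁ D₂ : ℝ≥0∞, D₁ ≠ ∞ ∧ D₂ ≠ ∞ ∧ ∀ f : (Fin (m+1) → ℝ) → ℂ, Measurable f →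
          herzNormC (m+1) p θ (-lam) f ≤
            D₁ * LMlamB (m+1) p θ lam (fun x => (‖f x‖₊ : ℝ≥0∞)) ∧
          LMlamB (m+1) p θ lam (fun x => (‖f x‖₊ : ℝ≥0∞)) ≤
            D₂ * herzNormC (m+1) p θ (-lam) f := by
      by_cases hθ' : θ = ∞
      · subst hθ'
        refine ⟨ENNReal.ofReal ((2:ℝ)^lam),
            ENNReal.ofReal ((2:ℝ)^lam) * (1 - ENNReal.ofReal ((2:ℝ)^(-lam)))⁻¹,
            ENNReal.ofReal_ne_top,
            ENNReal.mul_ne_top ENNReal.ofReal_ne_top (LMM.K_ne_top hlam0),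
            fun f hf => ?_⟩
        have hgmeas : Measurable fun x : Fin (m+1) → ℝ => ((‖f x‖₊ : ℝ≥0∞)) :=
          hf.nnnorm.coe_nnreal_ennreal
        constructor
        · simp only [herzNormC, if_pos rfl, LMM.LMlamB, LMM.morreyScale, if_pos rfl]
          exact LMM.herz_le_morrey_top hlam0
        · simp only [herzNormC, if_pos rfl, LMM.LMlamB, LMM.morreyScale, if_pos rfl]
          exact LMM.morrey_le_herz_top hp1 hgmeas hlam0
      · have hs : 1 ≤ θ.toReal := by simpa using ENNReal.toReal_mono hθ' hθ
        refine ⟨(((ENNReal.ofReal ((2:ℝ)^(-lam)))^θ.toReal * ENNReal.ofReal 2⁻¹)⁻¹)^(1/θ.toReal),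
            ENNReal.ofReal ((2:ℝ)^lam) * (1 - ENNReal.ofReal ((2:ℝ)^(-lam)))⁻¹, ?_,
            ENNReal.mul_ne_top ENNReal.ofReal_ne_top (LMM.K_ne_top hlam0), fun f hf => ?_⟩
        · refine ENNReal.rpow_ne_top_of_nonneg (by positivity) (ENNReal.inv_ne_top.2 ?_)
          refine mul_ne_zero ?_ (by simp)
          have hpos : (0:ℝ≥0∞) < ENNReal.ofReal ((2:ℝ)^(-lam)) :=
            ENNReal.ofReal_pos.2 (by positivity)
          simp [ENNReal.rpow_eq_zero_iff, hpos.ne', ENNReal.ofReal_ne_top]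
        · have hgmeas : Measurable fun x : Fin (m+1) → ℝ => ((‖f x‖₊ : ℝ≥0∞)) :=
            hf.nnnorm.coe_nnreal_ennreal
          constructor
          · simp only [herzNormC, if_neg hθ', LMM.LMlamB, LMM.morreyScale, if_neg hθ']
            exact LMM.herz_le_morrey_fin hlam0 hs
          · simp only [herzNormC, if_neg hθ', LMM.LMlamB, LMM.morreyScale, if_neg hθ']
            exact LMM.morrey_le_herz_fin hp1 hgmeas hlam0 hs
    set C : ℝ≥0 := (D₁ + D₂).toNNReal + 1 with hC
    have hCpos : 0 < C := by positivity
    have hsum_ne : D₁ + D₂ ≠ ∞ := ENNReal.add_ne_top.2 ⟨hD₁, hD₂⟩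
    have hcoe : (C : ℝ≥0∞) = (D₁ + D₂) + 1 := by
      rw [hC, ENNReal.coe_add, ENNReal.coe_toNNReal hsum_ne, ENNReal.coe_one]
    have hD1C : D₁ ≤ (C:ℝ≥0∞) := by
      rw [hcoe]
      exact le_add_right (le_add_right le_rfl)
    have hD2C : D₂ ≤ (C:ℝ≥0∞) := by
      rw [hcoe]
      exact le_add_right (le_add_left le_rfl)
    refine ⟨C, hCpos, fun f hf => ?_⟩
    obtain ⟨h1, h2⟩ := hDf f hf
    constructor
    · calc (C:ℝ≥0∞)⁻¹ * herzNormC (m+1) p θ (-lam) f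
          ≤ (C:ℝ≥0∞)⁻¹ * ((C:ℝ≥0∞) *
              LMlamB (m+1) p θ lam (fun x => (‖f x‖₊ : ℝ≥0∞))) :=
            mul_le_mul_right (h1.trans (mul_le_mul_left hD1C _)) _
        _ = LMlamB (m+1) p θ lam (fun x => (‖f x‖₊ : ℝ≥0∞)) := by
            rw [← mul_assoc, ENNReal.inv_mul_cancel (by exact_mod_cast hCpos.ne')
              ENNReal.coe_ne_top, one_mul]
    · exact h2.trans (mul_le_mul_left hD2C _)
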